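/- Let G be a strongly connected finite labeled digraph on n vertices with positive edge labels, and let L(G) be its Laplacian matrix (so that the linear mass-action system is ẋ = L(G)x and each column of L(G) sums to zero). Then ker(L(G)) is one-dimensional and is spanned by the vector ρ(G) whose i-th coordinate is ρ(G)_i = ∑_{T an i-tree of G} c^T, where c^T is the product of the labels of the edges of T; moreover every coordinate ρ(G)_i is strictly positive. -/

import Mathlib

open Function Finset

theorem iterUpdateEq {α : Type*} [DecidableEq α] (f : α → α) (a b v : α) :
    ∀ m : ℕ, (∀ t < m, f^[t] v ≠ a) → (Function.update f a b)^[m] v = f^[m] v := by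
  intro m
  induction m with
  | zero => intro _; rfl
  | succ m ih =>
      intro h
      rw [Function.iterate_succ_apply', Function.iterate_succ_apply',
        ih (fun t ht => h t (ht.trans (Nat.lt_succ_self m)))]
      exact Function.update_of_ne (h m (Nat.lt_succ_self m)) b f

theorem reachUpdate {α : Type*} [DecidableEq α] (f : α → α) (a b v : α)
    (h : ∃ m, f^[m] v = a) : ∃ m, (Function.update f a b)^[m] v = a := by
  classical
  refine ⟨Nat.find h, ?_⟩
  rw [iterUpdateEq f a b v _ (fun t ht => Nat.find_min h ht)]
  exact Nat.find_spec h

theorem iterPeriod {α : Type*} (f : α → α) (x : α) (p : ℕ) (hp : f^[p] x = x) (k : ℕ) :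
    f^[k] x = f^[k % p] x := by
  have hmul : ∀ q : ℕ, f^[p * q] x = x := by
    intro q
    induction q with
    | zero => rfl
    | succ q ih => rw [Nat.mul_succ, Function.iterate_add_apply, hp, ih]
  conv_lhs => rw [← Nat.mod_add_div k p, Function.iterate_add_apply, hmul]

def stepsRel {n : ℕ} (E : Fin n → Fin n → Prop) : ℕ → Fin n → Fin n → Prop
  | 0, j, i => j = i
  | (k+1), j, i => ∃ m, E j m ∧ stepsRel E k m i

theorem treeExists {n : ℕ} (E : Fin n → Fin n → Prop)
    (hconn : ∀ i j, Relation.ReflTransGen E i j) (i : Fin n) :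
    ∃ f : Fin n → Fin n, f i = i ∧ ∀ j, j ≠ i → (E j (f j) ∧ ∃ k, f^[k] j = i) := by
  classical
  have hsteps : ∀ j : Fin n, ∃ k, stepsRel E k j i := by
    intro j
    refine Relation.ReflTransGen.head_induction_on (hconn j i) ⟨0, rfl⟩ ?_
    rintro a b hab _ ⟨k, hk⟩
    exact ⟨k + 1, b, hab, hk⟩
  set d : Fin n → ℕ := fun j => Nat.find (hsteps j) with hd
  have key : ∀ j, j ≠ i → ∃ m, E j m ∧ d m < d j := by
    intro j hj
    have hspec : stepsRel E (d j) j i := Nat.find_spec (hsteps j)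
    cases hdj : d j with
    | zero => rw [hdj] at hspec; exact absurd hspec hj
    | succ k =>
        rw [hdj] at hspec
        obtain ⟨m, hm, hmk⟩ := hspec
        have h1 : d m ≤ k := Nat.find_le hmk
        refine ⟨m, hm, by omega⟩
  choose g hg1 hg2 using key
  refine ⟨fun j => if h : j = i then i else g j h, dif_pos rfl, ?_⟩
  set f : Fin n → Fin n := fun j => if h : j = i then i else g j h with hf
  have reach : ∀ N j, d j ≤ N → ∃ k, f^[k] j = i := by
    intro N
    induction N with
    | zero =>
        intro j h
        have hspec : stepsRel E (d j) j i := Nat.find_spec (hsteps j)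
        have : d j = 0 := Nat.le_zero.mp h
        rw [this] at hspec
        exact ⟨0, hspec⟩
    | succ N ih =>
        intro j h
        by_cases hj : j = i
        · exact ⟨0, hj⟩
        · obtain ⟨k, hk⟩ := ih (g j hj) (by have := hg2 j hj; omega)
          refine ⟨k + 1, ?_⟩
          rw [Function.iterate_succ_apply]
          simpa [hf, dif_neg hj] using hk
  intro j hj
  refine ⟨by simpa [hf, dif_neg hj] using hg1 j hj, reach (d j) j le_rfl⟩

noncomputable def predV {n : ℕ} (g : Fin n → Fin n) (i : Fin n) : Fin n := by
  classical
  exact if h : ∃ m, g^[m+1] i = i then g^[Nat.find h] i else i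

theorem predV_spec {n : ℕ} (g : Fin n → Fin n) (i : Fin n)
    (h : ∃ m, g^[m+1] i = i) :
    g (predV g i) = i ∧ ∃ m, g^[m] i = predV g i := by
  classical
  rw [predV]
  simp only [dif_pos h]
  constructor
  · have h1 := Nat.find_spec h
    rwa [Function.iterate_succ_apply'] at h1
  · exact ⟨_, rfl⟩

theorem predV_update {n : ℕ} (f : Fin n → Fin n) (i j : Fin n) (hji : j ≠ i)
    (hfj : f j = j) (hreach : ∃ k, f^[k] i = j) :
    predV (Function.update f j i) i = j := by
  classical
  set g := Function.update f j i with hg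
  set k := Nat.find hreach with hkdef
  have hk : f^[k] i = j := Nat.find_spec hreach
  have hmin : ∀ t < k, f^[t] i ≠ j := fun t ht => Nat.find_min hreach ht
  have hgk : ∀ t ≤ k, g^[t] i = f^[t] i := fun t ht =>
    iterUpdateEq f j i i t (fun s hs => hmin s (lt_of_lt_of_le hs ht))
  have hk1 : g^[k+1] i = i := by
    rw [Function.iterate_succ_apply', hgk k le_rfl, hk]
    exact Function.update_self j i f
  have hex : ∃ m, g^[m+1] i = i := ⟨k, hk1⟩
  rw [predV]
  simp only [dif_pos hex]
  set m := Nat.find hex with hmdef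
  have hm : g^[m+1] i = i := Nat.find_spec hex
  have hmk : m ≤ k := Nat.find_le hk1
  have hgm : g^[m] i = f^[m] i := hgk m hmk
  by_contra hne
  have hmltk : m < k := by
    rcases lt_or_eq_of_le hmk with h | h
    · exact h
    · exact absurd (by rw [h, hgk k le_rfl, hk]) hne
  have hfmj : f^[m] i ≠ j := hmin m hmltk
  have hper : f^[m+1] i = i := by
    rw [Function.iterate_succ_apply']
    have h1 : f (f^[m] i) = g (f^[m] i) := (Function.update_of_ne hfmj i f).symm
    rw [h1, ← hgm, ← Function.iterate_succ_apply' g m i, hm]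
  have hcontra := iterPeriod f i (m+1) hper k
  have hlt : k % (m+1) < k := lt_of_lt_of_le (Nat.mod_lt _ (Nat.succ_pos m)) (by omega)
  exact hmin _ hlt (by rw [← hcontra]; exact hk)

open Classical in
theorem keyIdentity {n : ℕ} (E : Fin n → Fin n → Prop) (c : Fin n → Fin n → ℝ)
    (hloop : ∀ i, ¬ E i i)
    (w : Fin n → Fin n → ℝ) (hw : ∀ a b, w a b = if E a b then c a b else 0)
    (Tr : Fin n → Finset (Fin n → Fin n))
    (hTr : ∀ j f, f ∈ Tr j ↔ (f j = j ∧ ∀ l, l ≠ j → (E l (f l) ∧ ∃ k, f^[k] l = j)))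
    (ρ : Fin n → ℝ)
    (hρ : ∀ j, ρ j = ∑ f ∈ Tr j, ∏ l ∈ Finset.univ.erase j, w l (f l))
    (i : Fin n) :
    (∑ k, w i k) * ρ i = ∑ j, w j i * ρ j := by
  classical
  have hw0 : ∀ a b, ¬ E a b → w a b = 0 := fun a b h => by rw [hw]; simp [h]
  set A : Finset (Fin n → Fin n) :=
    Finset.univ.filter (fun g => (∀ j, E j (g j)) ∧ ∀ v, ∃ m, g^[m] v = i) with hA
  have hmemA : ∀ g, g ∈ A ↔ ((∀ j, E j (g j)) ∧ ∀ v, ∃ m, g^[m] v = i) := by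
    intro g; simp [hA]
  -- LHS = sum over A
  have TL : (∑ k, w i k) * ρ i = ∑ g ∈ A, ∏ j, w j (g j) := by
    rw [hρ, Finset.sum_mul_sum]
    have e1 : ∑ k, ∑ f ∈ Tr i, w i k * ∏ l ∈ Finset.univ.erase i, w l (f l)
        = ∑ p ∈ Finset.univ ×ˢ Tr i, w i p.1 * ∏ l ∈ Finset.univ.erase i, w l (p.2 l) := by
      rw [Finset.sum_product]
    rw [e1]
    have e2 : ∑ p ∈ Finset.univ ×ˢ Tr i, w i p.1 * ∏ l ∈ Finset.univ.erase i, w l (p.2 l)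
        = ∑ p ∈ (Finset.univ.filter (fun k => E i k)) ×ˢ Tr i,
            w i p.1 * ∏ l ∈ Finset.univ.erase i, w l (p.2 l) := by
      refine (Finset.sum_subset
        (Finset.product_subset_product (Finset.filter_subset _ _) (Finset.Subset.refl _)) ?_).symm
      intro p hp hnp
      have hp2 : p.2 ∈ Tr i := (Finset.mem_product.mp hp).2
      have : ¬ E i p.1 := by
        intro hE
        exact hnp (Finset.mem_product.mpr ⟨Finset.mem_filter.mpr ⟨Finset.mem_univ _, hE⟩, hp2⟩)
      rw [hw0 _ _ this, zero_mul]
    rw [e2]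
    refine Finset.sum_nbij' (fun p => Function.update p.2 i p.1)
      (fun g => (g i, Function.update g i i)) ?_ ?_ ?_ ?_ ?_
    · intro p hp
      obtain ⟨hp1, hp2⟩ := Finset.mem_product.mp hp
      have hE : E i p.1 := (Finset.mem_filter.mp hp1).2
      obtain ⟨ht1, ht2⟩ := (hTr i p.2).mp hp2
      refine (hmemA _).mpr ⟨?_, ?_⟩
      · intro j
        by_cases hj : j = i
        · subst hj; rw [Function.update_self]; exact hE
        · rw [Function.update_of_ne hj]; exact (ht2 j hj).1
      · intro v
        by_cases hv : v = i
        · exact ⟨0, hv⟩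
        · exact reachUpdate p.2 i p.1 v (ht2 v hv).2
    · intro g hg
      obtain ⟨hedge, hreach⟩ := (hmemA g).mp hg
      refine Finset.mem_product.mpr ⟨Finset.mem_filter.mpr ⟨Finset.mem_univ _, hedge i⟩, ?_⟩
      refine (hTr i _).mpr ⟨Function.update_self i i g, fun j hj => ?_⟩
      show E j (Function.update g i i j) ∧ ∃ k, (Function.update g i i)^[k] j = i
      rw [Function.update_of_ne hj]
      exact ⟨hedge j, reachUpdate g i i j (hreach j)⟩
    · intro p hp
      obtain ⟨hp1, hp2⟩ := Finset.mem_product.mp hp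
      obtain ⟨ht1, _⟩ := (hTr i p.2).mp hp2
      have h2 : Function.update (Function.update p.2 i p.1) i i = p.2 := by
        rw [Function.update_idem]
        calc Function.update p.2 i i = Function.update p.2 i (p.2 i) := by rw [ht1]
          _ = p.2 := Function.update_eq_self i p.2
      rw [Function.update_self]
      exact Prod.ext rfl h2
    · intro g hg
      dsimp only
      rw [Function.update_idem]
      exact Function.update_eq_self i g
    · intro p hp
      rw [← Finset.mul_prod_erase Finset.univ _ (Finset.mem_univ i),
        Function.update_self]
      congr 1
      refine Finset.prod_congr rfl (fun l hl => ?_)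
      rw [Function.update_of_ne (Finset.mem_erase.mp hl).1]
  -- RHS = sum over A
  have TR : ∑ g ∈ A, ∏ j, w j (g j) = ∑ j, w j i * ρ j := by
    have TR1 : ∑ j, w j i * ρ j
        = ∑ p ∈ Finset.univ.filter
            (fun p : (Fin n) × (Fin n → Fin n) => E p.1 i ∧ p.2 ∈ Tr p.1),
          w p.1 i * ∏ l ∈ Finset.univ.erase p.1, w l (p.2 l) := by
      rw [Finset.sum_filter, ← Finset.univ_product_univ, Finset.sum_product]
      refine Finset.sum_congr rfl (fun j _ => ?_)
      rw [hρ j, Finset.mul_sum]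
      have e3 : ∀ f : Fin n → Fin n,
          (if E j i ∧ f ∈ Tr j then w j i * ∏ l ∈ Finset.univ.erase j, w l (f l) else 0)
          = (if f ∈ Tr j then w j i * ∏ l ∈ Finset.univ.erase j, w l (f l) else 0) := by
        intro f
        by_cases h1 : f ∈ Tr j <;> by_cases h2 : E j i <;>
          simp [h1, h2, hw0 j i]
      rw [Finset.sum_congr rfl (fun f _ => e3 f), Finset.sum_ite_mem, Finset.univ_inter]
    rw [TR1]
    refine Finset.sum_nbij' (fun g => (predV g i, Function.update g (predV g i) (predV g i)))
      (fun p => Function.update p.2 p.1 i) ?_ ?_ ?_ ?_ ?_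
    · intro g hg
      obtain ⟨hedge, hreach⟩ := (hmemA g).mp hg
      have hex : ∃ m, g^[m+1] i = i := by
        obtain ⟨t, ht⟩ := hreach (g i)
        exact ⟨t, by rw [Function.iterate_succ_apply]; exact ht⟩
      obtain ⟨hgp, m0, hm0⟩ := predV_spec g i hex
      set p := predV g i with hpdef
      have hEpi : E p i := by rw [← hgp]; exact hedge p
      refine Finset.mem_filter.mpr ⟨Finset.mem_univ _, hEpi, ?_⟩
      refine (hTr p _).mpr ⟨Function.update_self p p g, fun v hv => ?_⟩
      show E v (Function.update g p p v) ∧ ∃ k, (Function.update g p p)^[k] v = p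
      rw [Function.update_of_ne hv]
      refine ⟨hedge v, ?_⟩
      refine reachUpdate g p p v ?_
      obtain ⟨t, ht⟩ := hreach v
      exact ⟨m0 + t, by rw [Function.iterate_add_apply, ht, hm0]⟩
    · intro p hp
      obtain ⟨_, hEpi, htree⟩ := Finset.mem_filter.mp hp
      obtain ⟨ht1, ht2⟩ := (hTr p.1 p.2).mp htree
      refine (hmemA _).mpr ⟨?_, ?_⟩
      · intro v
        by_cases hv : v = p.1
        · subst hv; rw [Function.update_self]; exact hEpi
        · rw [Function.update_of_ne hv]; exact (ht2 v hv).1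
      · intro v
        have hrj : ∃ m, p.2^[m] v = p.1 := by
          by_cases hv : v = p.1
          · exact ⟨0, hv⟩
          · exact (ht2 v hv).2
        obtain ⟨m, hm⟩ := reachUpdate p.2 p.1 i v hrj
        exact ⟨m + 1, by rw [Function.iterate_succ_apply', hm, Function.update_self]⟩
    · intro g hg
      dsimp only
      obtain ⟨hedge, hreach⟩ := (hmemA g).mp hg
      have hex : ∃ m, g^[m+1] i = i := by
        obtain ⟨t, ht⟩ := hreach (g i)
        exact ⟨t, by rw [Function.iterate_succ_apply]; exact ht⟩
      obtain ⟨hgp, _⟩ := predV_spec g i hex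
      calc Function.update (Function.update g (predV g i) (predV g i)) (predV g i) i
          = Function.update g (predV g i) i := by rw [Function.update_idem]
        _ = Function.update g (predV g i) (g (predV g i)) := by rw [hgp]
        _ = g := Function.update_eq_self _ g
    · intro p hp
      obtain ⟨_, hEpi, htree⟩ := Finset.mem_filter.mp hp
      obtain ⟨ht1, ht2⟩ := (hTr p.1 p.2).mp htree
      have hji : p.1 ≠ i := fun he => hloop i (he ▸ hEpi)
      have hreach : ∃ k, p.2^[k] i = p.1 := (ht2 i (Ne.symm hji)).2
      have hpred : predV (Function.update p.2 p.1 i) i = p.1 :=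
        predV_update p.2 i p.1 hji ht1 hreach
      have h2 : Function.update (Function.update p.2 p.1 i) p.1 p.1 = p.2 := by
        rw [Function.update_idem]
        calc Function.update p.2 p.1 p.1 = Function.update p.2 p.1 (p.2 p.1) := by rw [ht1]
          _ = p.2 := Function.update_eq_self _ p.2
      ext1
      · simp [hpred]
      · simp only [hpred]
        exact h2
    · intro g hg
      dsimp only
      obtain ⟨hedge, hreach⟩ := (hmemA g).mp hg
      have hex : ∃ m, g^[m+1] i = i := by
        obtain ⟨t, ht⟩ := hreach (g i)
        exact ⟨t, by rw [Function.iterate_succ_apply]; exact ht⟩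
      obtain ⟨hgp, _⟩ := predV_spec g i hex
      rw [← Finset.mul_prod_erase Finset.univ _ (Finset.mem_univ (predV g i)), hgp]
      congr 1
      refine Finset.prod_congr rfl (fun l hl => ?_)
      rw [Function.update_of_ne (Finset.mem_erase.mp hl).1]
  rw [TL, TR]

open Classical in
theorem rhoPos {n : ℕ} (E : Fin n → Fin n → Prop) (c : Fin n → Fin n → ℝ)
    (hpos : ∀ i j, E i j → 0 < c i j)
    (hconn : ∀ i j, Relation.ReflTransGen E i j)
    (w : Fin n → Fin n → ℝ) (hw : ∀ a b, w a b = if E a b then c a b else 0)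
    (Tr : Fin n → Finset (Fin n → Fin n))
    (hTr : ∀ j f, f ∈ Tr j ↔ (f j = j ∧ ∀ l, l ≠ j → (E l (f l) ∧ ∃ k, f^[k] l = j)))
    (ρ : Fin n → ℝ)
    (hρ : ∀ j, ρ j = ∑ f ∈ Tr j, ∏ l ∈ Finset.univ.erase j, w l (f l)) :
    ∀ i, 0 < ρ i := by
  intro i
  obtain ⟨f₀, hf1, hf2⟩ := treeExists E hconn i
  rw [hρ]
  refine Finset.sum_pos (fun f hf => ?_) ⟨f₀, (hTr i f₀).mpr ⟨hf1, hf2⟩⟩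
  refine Finset.prod_pos (fun l hl => ?_)
  obtain ⟨hE, -⟩ := ((hTr i f).mp hf).2 l (Finset.mem_erase.mp hl).1
  rw [hw, if_pos hE]
  exact hpos _ _ hE

open Classical in
theorem stmt13 {n : ℕ} (E : Fin n → Fin n → Prop) (c : Fin n → Fin n → ℝ)
    (hloop : ∀ i, ¬ E i i)
    (hpos : ∀ i j, E i j → 0 < c i j)
    (hconn : ∀ i j, Relation.ReflTransGen E i j) :
    let w : Fin n → Fin n → ℝ := fun i j => if E i j then c i j else 0
    let L : Matrix (Fin n) (Fin n) ℝ :=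
      Matrix.of fun i j => if i = j then -(∑ k, w i k) else w j i
    let IsITreeFun : Fin n → (Fin n → Fin n) → Prop := fun i f =>
      f i = i ∧ ∀ j, j ≠ i → (E j (f j) ∧ ∃ k, f^[k] j = i)
    let ρ : Fin n → ℝ := fun i =>
      ∑ f ∈ Finset.univ.filter (IsITreeFun i),
        ∏ j ∈ Finset.univ.erase i, w j (f j)
    (∀ i, 0 < ρ i) ∧
    ∀ x : Fin n → ℝ, L.mulVec x = 0 ↔ ∃ t : ℝ, x = t • ρ := by
  intro w L IsITreeFun ρ
  have hw : ∀ a b, w a b = if E a b then c a b else 0 := fun _ _ => rfl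
  have hL : ∀ a b, L a b = if a = b then -(∑ k, w a k) else w b a := fun _ _ => rfl
  have hTr : ∀ j f, f ∈ Finset.univ.filter (IsITreeFun j) ↔
      (f j = j ∧ ∀ l, l ≠ j → (E l (f l) ∧ ∃ k, f^[k] l = j)) := by
    intro j f
    rw [Finset.mem_filter]
    simp only [Finset.mem_univ, true_and]
    exact Iff.rfl
  have hρ : ∀ j, ρ j = ∑ f ∈ Finset.univ.filter (IsITreeFun j),
      ∏ l ∈ Finset.univ.erase j, w l (f l) := fun _ => rfl
  have hρpos : ∀ i, 0 < ρ i := rhoPos E c hpos hconn w hw _ hTr ρ hρ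
  have hkey : ∀ i, (∑ k, w i k) * ρ i = ∑ j, w j i * ρ j :=
    keyIdentity E c hloop w hw _ hTr ρ hρ
  have hw0 : ∀ a b, ¬ E a b → w a b = 0 := fun a b h => by rw [hw, if_neg h]
  have hwnn : ∀ a b, 0 ≤ w a b := by
    intro a b
    by_cases h : E a b
    · rw [hw, if_pos h]; exact (hpos a b h).le
    · rw [hw0 a b h]
  have hmv : ∀ (z : Fin n → ℝ) (u : Fin n),
      L.mulVec z u = -(∑ k, w u k) * z u + ∑ j ∈ Finset.univ.erase u, w j u * z j := by
    intro z u
    have h1 : L.mulVec z u = ∑ j, L u j * z j := rfl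
    rw [h1, ← Finset.add_sum_erase _ _ (Finset.mem_univ u)]
    congr 1
    · rw [hL, if_pos rfl]
    · refine Finset.sum_congr rfl (fun j hj => ?_)
      rw [hL, if_neg (Ne.symm (Finset.mem_erase.mp hj).1)]
  have hLρ : L.mulVec ρ = 0 := by
    funext u
    rw [hmv ρ u]
    have h2 : w u u * ρ u + ∑ j ∈ Finset.univ.erase u, w j u * ρ j = ∑ j, w j u * ρ j :=
      Finset.add_sum_erase _ (fun j => w j u * ρ j) (Finset.mem_univ u)
    have h3 : w u u = 0 := hw0 u u (hloop u)
    have h4 := hkey u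
    show -(∑ k, w u k) * ρ u + ∑ j ∈ Finset.univ.erase u, w j u * ρ j = 0
    rw [h3, zero_mul, zero_add] at h2
    rw [h2, ← h4]
    ring
  refine ⟨hρpos, fun x => ⟨?_, ?_⟩⟩
  · intro hx
    rcases Nat.eq_zero_or_pos n with hn | hn
    · refine ⟨0, funext fun v => ?_⟩
      exact absurd v.2 (by omega)
    · obtain ⟨j₀, -, hj₀⟩ := Finset.exists_max_image Finset.univ (fun j => x j / ρ j)
        ⟨⟨0, hn⟩, Finset.mem_univ _⟩
      set t := x j₀ / ρ j₀ with ht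
      set y : Fin n → ℝ := fun v => t * ρ v - x v with hy
      have hy0 : ∀ v, 0 ≤ y v := by
        intro v
        have h5 := hj₀ v (Finset.mem_univ v)
        have h6 : x v ≤ t * ρ v := by
          have := (div_le_iff₀ (hρpos v)).mp h5
          linarith [this]
        simp only [hy]
        linarith
      have hyj : y j₀ = 0 := by
        simp only [hy, ht]
        rw [div_mul_cancel₀ _ (ne_of_gt (hρpos j₀))]
        ring
      have hLy : L.mulVec y = 0 := by
        have hy' : y = t • ρ - x := by
          funext v
          simp [hy, Pi.sub_apply, Pi.smul_apply, smul_eq_mul]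
        rw [hy', Matrix.mulVec_sub, Matrix.mulVec_smul, hLρ, hx, smul_zero, sub_zero]
      have hprop : ∀ u, y u = 0 → ∀ v, E v u → y v = 0 := by
        intro u hu v hEvu
        have h0 : L.mulVec y u = 0 := by rw [hLy]; rfl
        rw [hmv y u, hu, mul_zero, zero_add] at h0
        have hnn : ∀ j ∈ Finset.univ.erase u, 0 ≤ w j u * y j :=
          fun j _ => mul_nonneg (hwnn j u) (hy0 j)
        have hvm : v ∈ Finset.univ.erase u :=
          Finset.mem_erase.mpr ⟨fun he => hloop u (he ▸ hEvu), Finset.mem_univ v⟩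
        have h7 := (Finset.sum_eq_zero_iff_of_nonneg hnn).mp h0 v hvm
        have hwv : w v u ≠ 0 := by
          rw [hw, if_pos hEvu]
          exact ne_of_gt (hpos v u hEvu)
        exact (mul_eq_zero.mp h7).resolve_left hwv
      have hall : ∀ v, y v = 0 := by
        intro v
        refine Relation.ReflTransGen.head_induction_on (hconn v j₀) hyj ?_
        intro a b hab _ ih
        exact hprop b ih a hab
      refine ⟨t, funext fun v => ?_⟩
      have h8 := hall v
      simp only [hy] at h8
      simp only [Pi.smul_apply, smul_eq_mul]
      linarith
  · rintro ⟨t, rfl⟩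
    rw [Matrix.mulVec_smul, hLρ, smul_zero]
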